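/- For d ≥ 3 and h = h(d) with h(d)/√d → c ∈ (0,∞), setting τ₀ = (d-α)/2 - 1 with fixed α ∈ (0,2), there exists δ > 0 independent of d such that min_{τ ∈ [τ₀, τ₀+h]} e^{-τ} τ^{(d-α)/2 - 1} ≥ δ · max_{τ > 0} e^{-τ} τ^{(d-α)/2 - 1} for all sufficiently large d. -/

import Mathlib

open Real Filter Set

/-- For fixed `α ∈ (0,2)` and a window width `h(d)` with `h(d)/√d → c > 0`, there is
`δ > 0` independent of `d` such that, with `τ₀ = (d-α)/2 - 1`, for all large `d`,
`min_{τ ∈ [τ₀,τ₀+h(d)]} e^{-τ}τ^{(d-α)/2-1} ≥ δ · max_{τ>0} e^{-τ}τ^{(d-α)/2-1}`,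
the maximum being attained at `τ₀`. -/
theorem window_lower_bound (α : ℝ) (hα : 0 < α) (hα2 : α < 2)
    (h : ℕ → ℝ) (c : ℝ) (hc : 0 < c)
    (hh : Tendsto (fun d : ℕ => h d / Real.sqrt d) atTop (nhds c)) :
    ∃ δ : ℝ, 0 < δ ∧ ∀ᶠ d : ℕ in atTop,
      ∀ τ ∈ Icc (((d : ℝ) - α) / 2 - 1) ((((d : ℝ) - α) / 2 - 1) + h d),
        δ * (Real.exp (-((((d : ℝ) - α) / 2 - 1))) *
            ((((d : ℝ) - α) / 2 - 1) ^ (((d : ℝ) - α) / 2 - 1))) ≤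
          Real.exp (-τ) * τ ^ (((d : ℝ) - α) / 2 - 1) := by
  refine ⟨Real.exp (-(4 * (c + 1) ^ 2)), Real.exp_pos _, ?_⟩
  have e1 : ∀ᶠ d : ℕ in atTop, h d / Real.sqrt d < c + 1 :=
    hh.eventually_lt_const (by linarith)
  have e2 : ∀ᶠ d : ℕ in atTop, 0 < h d / Real.sqrt d :=
    hh.eventually_const_lt hc
  have e3 : ∀ᶠ d : ℕ in atTop, (2 * α + 4 : ℝ) ≤ (d : ℝ) :=
    tendsto_natCast_atTop_atTop.eventually_ge_atTop _
  filter_upwards [e1, e2, e3, eventually_ge_atTop 1] with d hd1 hd2 hd3 hd4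
  intro τ hτ
  set p : ℝ := ((d : ℝ) - α) / 2 - 1 with hp
  clear_value p
  have hdpos : (0 : ℝ) < d := by exact_mod_cast hd4
  have hsq : (0 : ℝ) < Real.sqrt d := Real.sqrt_pos.mpr hdpos
  have hppos : (d : ℝ) / 4 ≤ p := by rw [hp]; linarith
  have hp0 : 0 < p := lt_of_lt_of_le (by positivity) hppos
  have hh0 : 0 < h d := by
    have := mul_pos hd2 hsq
    rwa [div_mul_cancel₀ _ hsq.ne'] at this
  have hhle : h d ≤ (c + 1) * Real.sqrt d := by
    have := (div_lt_iff₀ hsq).mp hd1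
    linarith
  obtain ⟨hτ1, hτ2⟩ := hτ
  have hτpos : 0 < τ := lt_of_lt_of_le hp0 hτ1
  -- key quadratic bound
  have h1 : (τ - p) ^ 2 ≤ (h d) ^ 2 := by nlinarith
  have h2 : (h d) ^ 2 ≤ (c + 1) ^ 2 * d := by
    nlinarith [Real.sq_sqrt hdpos.le, hhle, hh0, hsq]
  have key2 : (τ - p) ^ 2 ≤ 4 * (c + 1) ^ 2 * τ := by
    nlinarith [h1, h2, mul_nonneg (sq_nonneg (c + 1)) (by linarith : (0:ℝ) ≤ 4 * p - d),
      mul_nonneg (sq_nonneg (c + 1)) (by linarith : (0:ℝ) ≤ τ - p)]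
  -- logarithmic lower bound
  have h6 := Real.log_le_sub_one_of_pos (div_pos hp0 hτpos)
  rw [Real.log_div hp0.ne' hτpos.ne'] at h6
  have h8 : p * (1 - p / τ) ≤ p * (Real.log τ - Real.log p) :=
    mul_le_mul_of_nonneg_left (by linarith) hp0.le
  have h9 : p * (1 - p / τ) * τ = p * (τ - p) := by
    field_simp
  rw [Real.rpow_def_of_pos hp0, Real.rpow_def_of_pos hτpos, ← Real.exp_add,
    ← Real.exp_add, ← Real.exp_add]
  refine Real.exp_le_exp.mpr ?_
  have h10 : (τ - p - 4 * (c + 1) ^ 2) * τ ≤ (p * (Real.log τ - Real.log p)) * τ := by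
    nlinarith [mul_le_mul_of_nonneg_right h8 hτpos.le, h9, key2]
  have h11 := (mul_le_mul_iff_of_pos_right hτpos).mp h10
  linarith
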